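/- Let T be a self-adjoint closed range operator on a complex Hilbert space, and suppose the proper splitting T = |T| − (|T| − T) converges, i.e., ρ(|T|†(|T| − T)) < 1. Then T is a positive operator (hence T = |T|). -/

import Mathlib

open ContinuousLinearMap

/-- `Td` is the Moore–Penrose inverse of `T`. -/
def IsMoorePenroseInverse {H : Type*} [NormedAddCommGroup H] [InnerProductSpace ℂ H]
    [CompleteSpace H] (T Td : H →L[ℂ] H) : Prop :=
  T ∘L Td ∘L T = T ∧ Td ∘L T ∘L Td = Td ∧
    IsSelfAdjoint (T ∘L Td) ∧ IsSelfAdjoint (Td ∘L T)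
set_option synthInstance.maxHeartbeats 1000000 in
set_option maxHeartbeats 1000000 in
/-- If the proper splitting `T = |T| - (|T| - T)` of a self-adjoint closed range operator
converges, then `T` is positive. -/
theorem positive_of_abs_splitting_converges
    {H : Type*} [NormedAddCommGroup H] [InnerProductSpace ℂ H] [CompleteSpace H]
    (T R Rd : H →L[ℂ] H)
    (hT : IsSelfAdjoint T)
    (hTcr : IsClosed (LinearMap.range (T : H →ₗ[ℂ] H) : Set H))
    -- R = |T|
    (hR : R.IsPositive) (hR2 : R ∘L R = adjoint T ∘L T)
    (hRd : IsMoorePenroseInverse R Rd)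
    (hconv : spectralRadius ℂ (Rd ∘L (R - T)) < 1) :
    T.IsPositive := by
  obtain ⟨m1, m2, m3, m4⟩ := hRd
  rw [show R ∘L Rd ∘L R = R * Rd * R from rfl] at m1
  rw [show Rd ∘L R ∘L Rd = Rd * R * Rd from rfl] at m2
  rw [show R ∘L Rd = R * Rd from rfl] at m3
  rw [show Rd ∘L R = Rd * R from rfl] at m4
  have hTadj : adjoint T = T := hT
  have hRsa : IsSelfAdjoint R := hR.isSelfAdjoint
  have hTT : T * T = R * R := by
    rw [show T * T = T ∘L T from rfl, show R * R = R ∘L R from rfl, hR2, hTadj]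
  -- R * (star Rd) * R = R
  have hstar1 : R * star Rd * R = R := by
    have h := congrArg star m1
    rw [star_mul, star_mul, hRsa.star_eq] at h
    rw [mul_assoc]; exact h
  -- R * Rd = Rd * R;  write Y := star Rd
  have key : R * Rd = Rd * R := by
    have e1 : R * Rd = (R * star Rd) * (R * Rd) := by
      conv_lhs => rw [← hstar1]
      noncomm_ring
    have e2 : R * star Rd = (R * Rd) * (R * star Rd) := by
      conv_lhs => rw [← m1]
      noncomm_ring
    have e3 : star (R * star Rd) = Rd * R := by
      rw [star_mul, star_star, hRsa.star_eq]
    have e4 : R * star Rd = Rd * R := by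
      calc R * star Rd = star (star (R * star Rd)) := (star_star _).symm
        _ = star (Rd * R) := by rw [e3]
        _ = Rd * R := m4.star_eq
    have e5 : R * star Rd = (R * star Rd) * (R * Rd) := by
      calc R * star Rd = star (R * star Rd) := by rw [e3, ← e4]
        _ = star ((R * Rd) * (R * star Rd)) := by rw [← e2]
        _ = star (R * star Rd) * star (R * Rd) := star_mul _ _
        _ = (R * star Rd) * (R * Rd) := by rw [e3, ← e4, m3.star_eq]
    rw [← e4, e5, ← e1]
  have hPsa : IsSelfAdjoint (R * Rd) := m3
  have hPR : (R * Rd) * R = R := m1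
  have hRP : R * (R * Rd) = R := by
    rw [key, ← mul_assoc]; exact m1
  have hPRd : (R * Rd) * Rd = Rd := by rw [key]; exact m2
  have hTP : T * (R * Rd) = T := by
    ext x
    have hy : R (x - (R * Rd) x) = 0 := by
      have h1 : R ((R*Rd) x) = (R * (R*Rd)) x := rfl
      rw [map_sub, h1, hRP, sub_self]
    have hTy : T (x - (R * Rd) x) = 0 := by
      set y := x - (R * Rd) x with hy'
      have h0 : inner ℂ (T y) (T y) = (0 : ℂ) := by
        calc inner ℂ (T y) (T y) = inner ℂ y ((adjoint T) (T y)) :=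
              (ContinuousLinearMap.adjoint_inner_right T _ _).symm
          _ = inner ℂ y ((adjoint T * T) y) := rfl
          _ = inner ℂ y ((R * R) y) := by rw [show adjoint T * T = R * R by rw [hTadj, hTT]]
          _ = inner ℂ y (R (R y)) := rfl
          _ = inner ℂ ((adjoint R) y) (R y) := by rw [ContinuousLinearMap.adjoint_inner_left]
          _ = inner ℂ ((adjoint R) y) (0 : H) := by rw [hy]
          _ = 0 := inner_zero_right _
      exact inner_self_eq_zero.mp h0
    have h2 : T x - T ((R*Rd) x) = 0 := by rw [← map_sub]; exact hTy
    have := sub_eq_zero.mp h2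
    exact (ContinuousLinearMap.mul_apply T (R*Rd) x).trans this.symm
  have hPT : (R * Rd) * T = T := by
    have h := congrArg star hTP
    rwa [star_mul, hPsa.star_eq, hT.star_eq] at h
  -- T commutes with R
  have hcomm : T * R = R * T := by
    have h1 : (0:H→L[ℂ]H) ≤ R := (ContinuousLinearMap.nonneg_iff_isPositive R).mpr hR
    have h2 : (0:H→L[ℂ]H) ≤ cfc (fun x : ℝ => |x|) T :=
      cfc_nonneg (fun x _ => abs_nonneg x)
    have h3 : cfc (fun x : ℝ => |x|) T * cfc (fun x : ℝ => |x|) T = R * R := by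
      rw [← cfc_mul ..]
      simp only [← sq, sq_abs]
      calc cfc (fun x : ℝ => x^2) T = cfc (fun x : ℝ => x) T ^ 2 := by rw [cfc_pow ..]
        _ = T ^ 2 := by rw [cfc_id' ..]
        _ = T * T := sq T
        _ = R * R := hTT
    have habs : R = cfc (fun x : ℝ => |x|) T := by
      have hu1 : CFC.sqrt (R*R) = R := CFC.sqrt_mul_self R h1
      have hu2 : CFC.sqrt (R*R) = cfc (fun x : ℝ => |x|) T := by
        rw [← h3]; exact CFC.sqrt_mul_self _ h2
      rw [← hu1, hu2]
    have hc : Commute (cfc (fun x : ℝ => (x:ℝ)) T) (cfc (fun x : ℝ => |x|) T) :=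
      cfc_commute_cfc _ _ T
    rw [cfc_id' ℝ T] at hc
    rw [habs]
    exact hc
  -- Rd * T = T * Rd
  have hRdT : Rd * T = T * Rd := by
    calc Rd * T = Rd * (T * (R * Rd)) := by rw [hTP]
      _ = Rd * (T * R) * Rd := by noncomm_ring
      _ = Rd * (R * T) * Rd := by rw [hcomm]
      _ = ((Rd * R) * T) * Rd := by noncomm_ring
      _ = (((R * Rd) * T)) * Rd := by rw [key]
      _ = T * Rd := by rw [hPT]
  have hRdT2 : (Rd * T) * (Rd * T) = R * Rd := by
    calc (Rd * T) * (Rd * T) = Rd * (T * Rd) * T := by noncomm_ring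
      _ = Rd * (Rd * T) * T := by rw [← hRdT]
      _ = (Rd * Rd) * (T * T) := by noncomm_ring
      _ = (Rd * Rd) * (R * R) := by rw [hTT]
      _ = Rd * ((Rd * R) * R) := by noncomm_ring
      _ = Rd * (((R * Rd)) * R) := by rw [key]
      _ = Rd * R := by rw [hPR]
      _ = R * Rd := key.symm
  have hPP : (R * Rd) * (R * Rd) = R * Rd := by
    calc (R * Rd) * (R * Rd) = ((R * Rd) * R) * Rd := by noncomm_ring
      _ = R * Rd := by rw [hPR]
  have hA2 : (Rd * (R - T)) * (Rd * (R - T)) = Rd * (R - T) + Rd * (R - T) := by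
    have hAeq : Rd * (R - T) = R * Rd - Rd * T := by rw [mul_sub, key]
    have hPRdT : (R * Rd) * (Rd * T) = Rd * T := by rw [← mul_assoc, hPRd]
    have hRdTP : (Rd * T) * (R * Rd) = Rd * T := by
      calc (Rd * T) * (R * Rd) = Rd * (T * (R * Rd)) := by noncomm_ring
        _ = Rd * T := by rw [hTP]
    calc (Rd * (R - T)) * (Rd * (R - T))
        = (R * Rd - Rd*T) * (R * Rd - Rd*T) := by rw [hAeq]
      _ = (R*Rd) * (R*Rd) - (R*Rd) * (Rd*T) - (Rd*T) * (R*Rd) + (Rd*T) * (Rd*T) := by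
          noncomm_ring
      _ = (R*Rd) - Rd*T - (Rd*T) + (R * Rd) := by rw [hPP, hPRdT, hRdTP, hRdT2]
      _ = (R*Rd - Rd*T) + (R*Rd - Rd*T) := by abel
      _ = Rd * (R - T) + Rd * (R - T) := by rw [hAeq]
  -- spectral radius bound gives Rd * (R - T) = 0
  have hA0 : Rd * (R - T) = 0 := by
    have h2mem : IsUnit (algebraMap ℂ (H →L[ℂ] H) 2 - Rd * (R - T)) := by
      have hlt : spectralRadius ℂ (Rd * (R - T)) < ‖(2:ℂ)‖₊ := by
        have he : Rd ∘L (R - T) = Rd * (R - T) := rfl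
        rw [he] at hconv
        refine lt_of_lt_of_le hconv ?_
        norm_num
      exact spectrum.mem_resolventSet_of_spectralRadius_lt hlt
    obtain ⟨u, hu⟩ := h2mem
    have hzero : (Rd * (R - T)) * (algebraMap ℂ (H →L[ℂ] H) 2 - Rd * (R - T)) = 0 := by
      have ha : (Rd * (R - T)) * (algebraMap ℂ (H →L[ℂ] H) 2)
          = Rd * (R - T) + Rd * (R - T) := by
        rw [Algebra.algebraMap_eq_smul_one, mul_smul_comm, mul_one, two_smul]
      rw [mul_sub, ha, hA2, sub_self]
    have hAu : (Rd * (R - T)) * ↑u = 0 := by rw [hu]; exact hzero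
    calc Rd * (R - T) = (Rd * (R - T)) * (↑u * ↑u⁻¹) := by rw [Units.mul_inv, mul_one]
      _ = ((Rd * (R - T)) * ↑u) * ↑u⁻¹ := (mul_assoc _ _ _).symm
      _ = 0 := by rw [hAu, zero_mul]
  -- conclude T = R
  have hTR : T = R := by
    have h1 : (R * Rd) * (R - T) = 0 := by
      rw [mul_assoc, hA0, mul_zero]
    have h2 : (R * Rd) * R - (R * Rd) * T = 0 := by rw [← mul_sub]; exact h1
    rw [hPR, hPT] at h2
    exact (sub_eq_zero.mp h2).symm
  rw [hTR]; exact hR
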